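/- Let f : (0,∞) → ℝ satisfy f(x) ≥ 0 for all x > 0, f(x) = 0 if and only if x = 1, f extends continuously to [0,1], f is C¹ on (0,1], and f'(x) < 0 for x ∈ (0,1). Define H(ρ) = inf_{x>0} ( ρx + f(x) ) for ρ ≥ 0. Then lim_{ρ→0⁺} H(ρ)/ρ = 1. -/
import Mathlib


open Filter

/-- The infimal transform `H(ρ) = inf_{x>0} (ρx + f(x))` of a nonnegative profile `f`
vanishing only at `x = 1`, continuous on `[0,1]`, C¹ on `(0,1]` with `f' < 0` on
`(0,1)`, satisfies `H(ρ)/ρ → 1` as `ρ → 0⁺` (condition (K3)). -/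
theorem inf_transform_K3 (f f' : ℝ → ℝ)
    (hnn : ∀ x : ℝ, 0 < x → 0 ≤ f x)
    (hzero : ∀ x : ℝ, 0 < x → (f x = 0 ↔ x = 1))
    (hcont : ContinuousOn f (Set.Icc 0 1))
    (hderiv : ∀ x ∈ Set.Ioc (0 : ℝ) 1, HasDerivAt f (f' x) x)
    (hf'cont : ContinuousOn f' (Set.Ioc 0 1))
    (hf'neg : ∀ x ∈ Set.Ioo (0 : ℝ) 1, f' x < 0)
    (H : ℝ → ℝ)
    (hH : ∀ ρ : ℝ, H ρ = sInf ((fun x => ρ * x + f x) '' Set.Ioi 0)) :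
    Tendsto (fun ρ => H ρ / ρ) (nhdsWithin 0 (Set.Ioi 0)) (nhds 1) := by
  rw [Metric.tendsto_nhdsWithin_nhds]
  intro ε hε
  set e : ℝ := min ε 1 / 2 with he
  have he0 : 0 < e := by
    have : 0 < min ε 1 := lt_min hε one_pos
    positivity
  have he1 : e < 1 := by
    have : min ε 1 ≤ 1 := min_le_right _ _
    rw [he]; linarith
  have heε : e < ε := by
    have : min ε 1 ≤ ε := min_le_left _ _
    rw [he]; linarith
  set a : ℝ := 1 - e with ha
  have ha0 : 0 < a := by rw [ha]; linarith
  have ha1 : a < 1 := by rw [ha]; linarith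
  have hcont' : ContinuousOn f (Set.Ioc 0 1) := fun x hx =>
    (hderiv x hx).continuousAt.continuousWithinAt
  have hanti : StrictAntiOn f (Set.Ioc 0 1) := by
    apply strictAntiOn_of_deriv_neg (convex_Ioc 0 1) hcont'
    intro x hx
    rw [interior_Ioc] at hx
    rw [(hderiv x ⟨hx.1, hx.2.le⟩).deriv]
    exact hf'neg x hx
  have hfa : 0 < f a := by
    rcases (hnn a ha0).lt_or_eq with h | h
    · exact h
    · exact absurd ((hzero a ha0).mp h.symm) ha1.ne
  refine ⟨f a / a, by positivity, ?_⟩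
  intro ρ hρ0 hd
  have hρ0 : (0 : ℝ) < ρ := hρ0
  rw [Real.dist_eq, sub_zero, abs_of_pos hρ0] at hd
  have hρa : ρ * a < f a := (lt_div_iff₀ ha0).mp hd
  have hbdd : BddBelow ((fun x => ρ * x + f x) '' Set.Ioi 0) := by
    refine ⟨0, ?_⟩
    rintro y ⟨x, hx, rfl⟩
    have hx0 : (0 : ℝ) < x := hx
    have := hnn x hx0
    dsimp only
    nlinarith
  have hub : H ρ ≤ ρ := by
    rw [hH]
    have h1 : ρ * 1 + f 1 = ρ := by
      rw [(hzero 1 one_pos).mpr rfl]; ring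
    calc sInf ((fun x => ρ * x + f x) '' Set.Ioi 0) ≤ ρ * 1 + f 1 :=
          csInf_le hbdd ⟨1, Set.mem_Ioi.mpr one_pos, rfl⟩
      _ = ρ := h1
  have hlb : ρ * a ≤ H ρ := by
    rw [hH]
    have hne : ((fun x => ρ * x + f x) '' Set.Ioi 0).Nonempty :=
      ⟨ρ * 1 + f 1, ⟨1, Set.mem_Ioi.mpr one_pos, rfl⟩⟩
    apply le_csInf hne
    rintro y ⟨x, hx, rfl⟩
    have hx0 : (0 : ℝ) < x := hx
    dsimp only
    rcases le_or_gt x a with hxa | hxa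
    · have hfx : f a ≤ f x := by
        rcases hxa.lt_or_eq with h | h
        · exact (hanti ⟨hx0, hxa.trans ha1.le⟩ ⟨ha0, ha1.le⟩ h).le
        · rw [h]
      nlinarith
    · have h1 : ρ * a ≤ ρ * x := by nlinarith
      have := hnn x hx0
      linarith
  have h1 : H ρ / ρ ≤ 1 := by rw [div_le_one hρ0]; exact hub
  have h2 : a ≤ H ρ / ρ := by rw [le_div_iff₀ hρ0]; linarith
  rw [Real.dist_eq]
  have : |H ρ / ρ - 1| ≤ e := by
    rw [abs_le]
    constructor <;> [linarith [ha ▸ h2]; linarith]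
  linarith
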